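/- Let G be a finite group and N₁, N₂ normal subgroups of G with N₁ ∩ N₂ = 1. Let p, q be distinct primes. Then the Sylow graph Γ_s(G) has the edge (p,q) if and only if Γ_s(G/N₁) has the edge (p,q) or Γ_s(G/N₂) has the edge (p,q). (The Sylow graph function is R₀-closed.) -/

import Mathlib

/-- The join of a set of normal subgroups is normal. -/
theorem sSup_normal {G : Type*} [Group G] (S : Set (Subgroup G)) (hS : ∀ N ∈ S, N.Normal) :
    (sSup S).Normal := by
  constructor
  intro n hn g
  rw [sSup_eq_iSup'] at hn ⊢
  refine Subgroup.iSup_induction (C := fun x => g * x * g⁻¹ ∈ ⨆ N : S, (N : Subgroup G))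
    _ hn ?_ ?_ ?_
  · intro N x hx
    exact Subgroup.mem_iSup_of_mem N ((hS N N.2).conj_mem x hx g)
  · simpa using Subgroup.one_mem _
  · intro x y hx hy
    have h : g * (x * y) * g⁻¹ = (g * x * g⁻¹) * (g * y * g⁻¹) := by group
    rw [h]; exact Subgroup.mul_mem _ hx hy

/-- The `p'`-core `O_{p'}(G)`: the largest normal subgroup of `G` of order coprime to `p`,
realized as the join of all normal subgroups of order coprime to `p`. -/
def pPrimeCore (p : ℕ) (G : Type*) [Group G] : Subgroup G :=
  sSup {N : Subgroup G | N.Normal ∧ Nat.Coprime (Nat.card N) p}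

instance pPrimeCore_normal (p : ℕ) (G : Type*) [Group G] : (pPrimeCore p G).Normal :=
  sSup_normal _ fun _ hN => hN.1

/-- The `p`-core `O_p(G)`: the largest normal `p`-subgroup of `G`,
realized as the join of all normal `p`-subgroups. -/
def pCore (p : ℕ) (G : Type*) [Group G] : Subgroup G :=
  sSup {N : Subgroup G | N.Normal ∧ IsPGroup p N}

instance pCore_normal (p : ℕ) (G : Type*) [Group G] : (pCore p G).Normal :=
  sSup_normal _ fun _ hN => hN.1

/-- `O_{p',p}(G)`: the preimage in `G` of `O_p(G / O_{p'}(G))`. -/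
def OpPrimeP (p : ℕ) (G : Type*) [Group G] : Subgroup G :=
  (pCore p (G ⧸ pPrimeCore p G)).comap (QuotientGroup.mk' (pPrimeCore p G))

/-- A Schmidt group: a non-nilpotent group all of whose proper subgroups are nilpotent. -/
def IsSchmidt (G : Type*) [Group G] : Prop :=
  ¬ Group.IsNilpotent G ∧ ∀ H : Subgroup G, H ≠ ⊤ → Group.IsNilpotent H

/-- A Schmidt `(p,q)`-group: a Schmidt group whose order is divisible by exactly the
primes `p` and `q` and whose Sylow `p`-subgroup is normal. -/
def IsSchmidtPQ (p q : ℕ) (G : Type*) [Group G] : Prop :=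
  IsSchmidt G ∧ (Nat.card G).primeFactors = {p, q} ∧ ∃ P : Sylow p G, (P : Subgroup G).Normal

/-- `(p, q)` is an edge of the Sylow graph of `G`: `p ≠ q` and `q` divides the order of
`N_G(P)/(P·C_G(P))` for some Sylow `p`-subgroup `P` of `G`. -/
def SylowEdge (p q : ℕ) (G : Type*) [Group G] : Prop :=
  p ≠ q ∧ ∃ P : Sylow p G,
    q ∣ ((P : Subgroup G) ⊔ Subgroup.centralizer ((P : Subgroup G) : Set G)).relIndex
      (Subgroup.normalizer ((P : Subgroup G) : Set G))

section SylowHelpers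

section helpers
variable {G : Type*} [Group G] {p q : ℕ}

lemma cen_le_norm (P : Subgroup G) : Subgroup.centralizer (P : Set G) ≤ Subgroup.normalizer (P : Set G) := by
  intro c hc
  rw [Subgroup.mem_normalizer_iff]
  intro x
  constructor
  · intro hx
    have h := Subgroup.mem_centralizer_iff.mp hc x hx
    have : c * x * c⁻¹ = x := by rw [← h]; group
    rwa [this]
  · intro hx
    have h := Subgroup.mem_centralizer_iff.mp hc _ hx
    have : x = c * x * c⁻¹ := by
      have := h
      calc x = c⁻¹ * (c * x * c⁻¹) * c := by group
      _ = c⁻¹ * ((c * x * c⁻¹) * c) := by group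
      _ = c⁻¹ * (c * (c * x * c⁻¹)) := by rw [h]
      _ = c * x * c⁻¹ := by group
    rwa [this]
end helpers

section helpers2
variable {G : Type*} [Group G] {p q : ℕ}

lemma sup_cen_le_norm (P : Subgroup G) :
    P ⊔ Subgroup.centralizer (P : Set G) ≤ Subgroup.normalizer (P : Set G) :=
  sup_le Subgroup.le_normalizer (cen_le_norm P)

lemma conj_mem_cen {P : Subgroup G} {g c : G} (hg : g ∈ Subgroup.normalizer (P : Set G))
    (hc : c ∈ Subgroup.centralizer (P : Set G)) :
    g * c * g⁻¹ ∈ Subgroup.centralizer (P : Set G) := by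
  rw [Subgroup.mem_centralizer_iff] at hc ⊢
  intro x hx
  have hx' : g⁻¹ * x * g ∈ P := by
    have := (Subgroup.mem_normalizer_iff.mp (inv_mem hg) x).mp hx
    rwa [inv_inv] at this
  have h := hc _ hx'
  calc x * (g * c * g⁻¹) = g * ((g⁻¹ * x * g) * c) * g⁻¹ := by group
    _ = g * (c * (g⁻¹ * x * g)) * g⁻¹ := by rw [h]
    _ = (g * c * g⁻¹) * x := by group

lemma mem_sup_decomp {P : Subgroup G} {y : G}
    (hy : y ∈ P ⊔ Subgroup.centralizer (P : Set G)) :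
    ∃ a ∈ P, ∃ c ∈ Subgroup.centralizer (P : Set G), y = a * c := by
  set C := Subgroup.centralizer (P : Set G) with hC
  set K := Subgroup.normalizer (P : Set G) with hK
  have hyK : y ∈ K := sup_cen_le_norm P hy
  have hy' : (⟨y, hyK⟩ : K) ∈ (P ⊔ C).subgroupOf K := by
    rwa [Subgroup.mem_subgroupOf]
  rw [Subgroup.subgroupOf_sup Subgroup.le_normalizer (cen_le_norm P)] at hy'
  have hset := Subgroup.normal_mul (P.subgroupOf K) (C.subgroupOf K)
  have : (⟨y, hyK⟩ : K) ∈ (↑(P.subgroupOf K ⊔ C.subgroupOf K) : Set K) := hy'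
  rw [hset] at this
  obtain ⟨a, ha, c, hc, hac⟩ := this
  refine ⟨↑a, ha, ↑c, hc, ?_⟩
  have := congrArg (Subtype.val) hac
  simpa using this.symm

lemma sup_cen_subgroupOf_normal (P : Subgroup G) :
    ((P ⊔ Subgroup.centralizer (P : Set G)).subgroupOf (Subgroup.normalizer (P : Set G))).Normal := by
  set C := Subgroup.centralizer (P : Set G) with hC
  set K := Subgroup.normalizer (P : Set G) with hK
  constructor
  intro n hn g
  rw [Subgroup.mem_subgroupOf] at hn ⊢
  obtain ⟨a, ha, c, hc, hacn⟩ := mem_sup_decomp hn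
  have h1 : (g : G) * a * (g : G)⁻¹ ∈ P := (Subgroup.mem_normalizer_iff.mp g.2 a).mp ha
  have h2 : (g : G) * c * (g : G)⁻¹ ∈ C := conj_mem_cen g.2 hc
  have hcoe : ((g * n * g⁻¹ : K) : G) = (g : G) * (a * c) * (g : G)⁻¹ := by
    push_cast
    rw [hacn]
  rw [hcoe]
  have : (g : G) * (a * c) * (g : G)⁻¹ =
      ((g : G) * a * (g : G)⁻¹) * ((g : G) * c * (g : G)⁻¹) := by group
  rw [this]
  exact Subgroup.mul_mem_sup h1 h2

end helpers2

section helpers3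
variable {G : Type*} [Group G] {p q : ℕ}

lemma exists_pow_eq' [Finite G] (x : G) {m : ℕ} (h : Nat.Coprime m (orderOf x)) :
    ∃ u, (x ^ m) ^ u = x := by
  have ht : 0 < orderOf x := orderOf_pos x
  refine ⟨m ^ ((orderOf x).totient - 1), ?_⟩
  rw [← pow_mul]
  have hφ : 0 < (orderOf x).totient := Nat.totient_pos.mpr ht
  have hmm : m * m ^ ((orderOf x).totient - 1) = m ^ (orderOf x).totient := by
    rw [← pow_succ']
    congr 1
    omega
  rw [hmm]
  have hm : m ^ (orderOf x).totient ≡ 1 [MOD orderOf x] := Nat.ModEq.pow_totient h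
  conv_rhs => rw [← pow_one x]
  rw [pow_eq_pow_iff_modEq]
  exact hm

/-- key coprimality lemma: a `q`-element of the normalizer lying in `P ⊔ C_G(P)`
centralizes `P`. -/
lemma commute_of_mem_sup [Finite G] (hp : p.Prime) (hq : q.Prime) (hpq : p ≠ q)
    (P : Sylow p G) {y : G} {n : ℕ} (hyq : y ^ q ^ n = 1)
    (hmem : y ∈ (P : Subgroup G) ⊔ Subgroup.centralizer ((P : Subgroup G) : Set G)) :
    ∀ a ∈ (P : Subgroup G), y * a = a * y := by
  set C := Subgroup.centralizer ((P : Subgroup G) : Set G) with hC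
  obtain ⟨a₀, ha₀, c₀, hc₀, rfl⟩ := mem_sup_decomp hmem
  set y := a₀ * c₀ with hy
  have h1 : ∀ x ∈ (P : Subgroup G), y * x * y⁻¹ = a₀ * x * a₀⁻¹ := by
    intro x hx
    have hcx := Subgroup.mem_centralizer_iff.mp hc₀ x hx
    have hc : c₀ * x * c₀⁻¹ = x := by rw [← hcx]; group
    calc y * x * y⁻¹ = a₀ * (c₀ * x * c₀⁻¹) * a₀⁻¹ := by rw [hy]; group
      _ = a₀ * x * a₀⁻¹ := by rw [hc]
  have claim : ∀ k : ℕ, ∀ x ∈ (P : Subgroup G),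
      y ^ k * x * (y ^ k)⁻¹ = a₀ ^ k * x * (a₀ ^ k)⁻¹ := by
    intro k
    induction k with
    | zero => intro x _; simp
    | succ k ih =>
      intro x hx
      have hmem' : a₀ ^ k * x * (a₀ ^ k)⁻¹ ∈ (P : Subgroup G) :=
        mul_mem (mul_mem (pow_mem ha₀ k) hx) (inv_mem (pow_mem ha₀ k))
      calc y ^ (k + 1) * x * (y ^ (k + 1))⁻¹
          = y * (y ^ k * x * (y ^ k)⁻¹) * y⁻¹ := by rw [pow_succ']; group
        _ = y * (a₀ ^ k * x * (a₀ ^ k)⁻¹) * y⁻¹ := by rw [ih x hx]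
        _ = a₀ * (a₀ ^ k * x * (a₀ ^ k)⁻¹) * a₀⁻¹ := h1 _ hmem'
        _ = a₀ ^ (k + 1) * x * (a₀ ^ (k + 1))⁻¹ := by rw [pow_succ']; group
  have hb : a₀ ^ q ^ n ∈ C := by
    rw [hC, Subgroup.mem_centralizer_iff]
    intro x hx
    have := claim (q ^ n) x hx
    rw [hyq] at this
    simp only [one_mul, inv_one, mul_one] at this
    conv_lhs => rw [this]
    group
  -- orderOf a₀ divides a power of p
  obtain ⟨s, hs⟩ := P.2 ⟨a₀, ha₀⟩
  have hs' : a₀ ^ p ^ s = 1 := by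
    have := congrArg (Subtype.val) hs
    simpa using this
  have hdvd : orderOf a₀ ∣ p ^ s := orderOf_dvd_of_pow_eq_one hs'
  have hcop1 : Nat.Coprime (q ^ n) (p ^ s) :=
    Nat.Coprime.pow n s ((Nat.coprime_primes hq hp).mpr hpq.symm)
  have hcop : Nat.Coprime (q ^ n) (orderOf a₀) := hcop1.coprime_dvd_right hdvd
  obtain ⟨u, hu⟩ := exists_pow_eq' a₀ hcop
  have ha₀C : a₀ ∈ C := by rw [← hu]; exact pow_mem hb u
  intro a ha
  have hcx := Subgroup.mem_centralizer_iff.mp ha₀C a ha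
  have := h1 a ha
  have h2 : y * a * y⁻¹ = a := by
    rw [this, ← hcx]; group
  calc y * a = (y * a * y⁻¹) * y := by group
    _ = a * y := by rw [h2]
end helpers3


section lemA
variable {G : Type*} [Group G] {p q : ℕ}

lemma sylowEdge_iff [Finite G] (hp : p.Prime) (hq : q.Prime) (hpq : p ≠ q) :
    SylowEdge p q G ↔ ∃ P : Sylow p G, ∃ y : G, y ∈ Subgroup.normalizer ((P : Subgroup G) : Set G) ∧
      (∃ n : ℕ, y ^ q ^ n = 1) ∧ ∃ a ∈ (P : Subgroup G), y * a ≠ a * y := by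
  constructor
  · rintro ⟨-, P, hdvd⟩
    set C := Subgroup.centralizer ((P : Subgroup G) : Set G) with hCdef
    set K := Subgroup.normalizer ((P : Subgroup G) : Set G) with hKdef
    haveI : ((((P : Subgroup G)) ⊔ C).subgroupOf K).Normal := sup_cen_subgroupOf_normal _
    haveI : Fact q.Prime := ⟨hq⟩
    have hdvd' : q ∣ Nat.card (K ⧸ ((P : Subgroup G) ⊔ C).subgroupOf K) := by
      rwa [Subgroup.relIndex, Subgroup.index_eq_card] at hdvd
    obtain ⟨xb, hxb⟩ := exists_prime_orderOf_dvd_card' q hdvd'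
    obtain ⟨z, rfl⟩ := QuotientGroup.mk_surjective xb
    set k := orderOf z with hk
    have hk0 : k ≠ 0 := (orderOf_pos z).ne'
    set m := ordCompl[q] k with hm
    set a := k.factorization q with ha
    have hqa : (z : K) ^ m * ((z : K) ^ m) ^ 0 = (z:K)^m := by group
    have hzk : z ^ (m * q ^ a) = 1 := by
      rw [mul_comm, Nat.ordProj_mul_ordCompl_eq_self]
      exact pow_orderOf_eq_one z
    have hcop : Nat.Coprime q m := Nat.coprime_ordCompl hq hk0
    have hymk : ((z ^ m : K) : K ⧸ ((P : Subgroup G) ⊔ C).subgroupOf K)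
        = (z : K ⧸ ((P : Subgroup G) ⊔ C).subgroupOf K) ^ m := by
      rw [QuotientGroup.mk_pow]
    have hne1 : (z : K ⧸ ((P : Subgroup G) ⊔ C).subgroupOf K) ^ m ≠ 1 := by
      intro h
      have : orderOf (z : K ⧸ ((P : Subgroup G) ⊔ C).subgroupOf K) ∣ m :=
        orderOf_dvd_of_pow_eq_one h
      rw [hxb] at this
      have : q ∣ Nat.gcd q m := Nat.dvd_gcd dvd_rfl this
      rw [hcop] at this
      exact hq.one_lt.ne' (Nat.dvd_one.mp this)
    have hymem : (z ^ m : K) ∉ ((P : Subgroup G) ⊔ C).subgroupOf K := by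
      intro h
      exact hne1 (hymk ▸ (QuotientGroup.eq_one_iff _).mpr h)
    refine ⟨P, ((z : K) : G) ^ m, ?_, ⟨a, ?_⟩, ?_⟩
    · exact pow_mem z.2 m
    · have : ((z : K) : G) ^ (m * q ^ a) = 1 := by
        have := congrArg (Subtype.val) hzk
        push_cast at this
        simpa using this
      rwa [pow_mul] at this
    · have hnC : ((z : K) : G) ^ m ∉ C := by
        intro h
        apply hymem
        rw [Subgroup.mem_subgroupOf]
        push_cast
        exact Subgroup.mem_sup_right h
      rw [hCdef, Subgroup.mem_centralizer_iff] at hnC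
      push_neg at hnC
      obtain ⟨x, hx, hxe⟩ := hnC
      exact ⟨x, hx, fun h => hxe (h.symm)⟩
  · rintro ⟨P, y, hyK, ⟨n, hyq⟩, x, hx, hne⟩
    refine ⟨hpq, P, ?_⟩
    set C := Subgroup.centralizer ((P : Subgroup G) : Set G) with hCdef
    set K := Subgroup.normalizer ((P : Subgroup G) : Set G) with hKdef
    haveI : ((((P : Subgroup G)) ⊔ C).subgroupOf K).Normal := sup_cen_subgroupOf_normal _
    have hynmem : y ∉ (P : Subgroup G) ⊔ C := by
      intro h
      exact hne (commute_of_mem_sup hp hq hpq P hyq h x hx)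
    set yb : K ⧸ ((P : Subgroup G) ⊔ C).subgroupOf K :=
      QuotientGroup.mk (s := ((P : Subgroup G) ⊔ C).subgroupOf K) (⟨y, hyK⟩ : K) with hyb
    have hyb1 : yb ≠ 1 := by
      intro h
      rw [hyb, QuotientGroup.eq_one_iff, Subgroup.mem_subgroupOf] at h
      exact hynmem h
    have hybq : yb ^ q ^ n = 1 := by
      rw [hyb, ← QuotientGroup.mk_pow]
      rw [QuotientGroup.eq_one_iff, Subgroup.mem_subgroupOf]
      push_cast
      rw [hyq]
      exact one_mem _
    have hdvd1 : orderOf yb ∣ q ^ n := orderOf_dvd_of_pow_eq_one hybq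
    obtain ⟨i, hin, hoi⟩ := (Nat.dvd_prime_pow hq).mp hdvd1
    have hi0 : i ≠ 0 := by
      rintro rfl
      rw [pow_zero, orderOf_eq_one_iff] at hoi
      exact hyb1 hoi
    have hqdvd : q ∣ orderOf yb := hoi ▸ dvd_pow_self q hi0
    rw [Subgroup.relIndex, Subgroup.index_eq_card]
    exact hqdvd.trans (orderOf_dvd_natCard yb)

end lemA

section lift
variable {G : Type*} [Group G] {p q : ℕ}

/-- for a surjective hom and a Sylow `P`, every element of the normalizer of the
image is the image of an element of the normalizer. -/
lemma exists_lift_normalizer {G' : Type*} [Group G'] [Finite G] [Fact p.Prime]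
    (f : G →* G') (hf : Function.Surjective f) (P : Sylow p G) {x : G'}
    (hx : x ∈ Subgroup.normalizer ((Subgroup.map f (P : Subgroup G) : Subgroup G') : Set G')) :
    ∃ z ∈ Subgroup.normalizer ((P : Subgroup G) : Set G), f z = x := by
  haveI : Finite G' := Finite.of_surjective f hf
  obtain ⟨w, rfl⟩ := hf x
  set H := Subgroup.comap f (Subgroup.map f (P : Subgroup G)) with hH
  have h1 : (P : Subgroup G) ≤ H := Subgroup.le_comap_map _ _
  have h2 : ((w • P : Sylow p G) : Subgroup G) ≤ H := by
    intro y hy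
    rw [Sylow.coe_subgroup_smul] at hy
    rw [Subgroup.mem_pointwise_smul_iff_inv_smul_mem] at hy
    have hy' : w⁻¹ * y * w ∈ (P : Subgroup G) := by
      simpa [MulAut.smul_def, mul_assoc] using hy
    have : f y = f w * f (w⁻¹ * y * w) * (f w)⁻¹ := by
      simp [map_mul]
      group
    rw [hH, Subgroup.mem_comap, this]
    exact (Subgroup.mem_normalizer_iff.mp hx _).mp ⟨_, hy', rfl⟩
  obtain ⟨h, hh⟩ := MulAction.exists_smul_eq H ((w • P).subtype h2) (P.subtype h1)
  simp_rw [Sylow.smul_subtype, Subgroup.smul_def, smul_smul] at hh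
  have hn : (↑h * w) ∈ Subgroup.normalizer ((P : Subgroup G) : Set G) :=
    Sylow.smul_eq_iff_mem_normalizer.mp (Sylow.subtype_injective hh)
  have hfh : f ↑h ∈ Subgroup.map f (P : Subgroup G) := h.2
  obtain ⟨a, haP, hfa⟩ := hfh
  refine ⟨a⁻¹ * (↑h * w), mul_mem (inv_mem (Subgroup.le_normalizer haP)) hn, ?_⟩
  rw [map_mul, map_mul, map_inv, hfa]
  group

end lift

section lift2
variable {G : Type*} [Group G] {p q : ℕ}

lemma nonCentral_lift [Finite G] (hq : q.Prime) {G' : Type*} [Group G'] [Fact p.Prime]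
    (f : G →* G') (hf : Function.Surjective f)
    (h : ∃ Q : Sylow p G', ∃ x : G', x ∈ Subgroup.normalizer ((Q : Subgroup G') : Set G') ∧
      (∃ n : ℕ, x ^ q ^ n = 1) ∧ ∃ b ∈ (Q : Subgroup G'), x * b ≠ b * x) :
    ∃ P : Sylow p G, ∃ y : G, y ∈ Subgroup.normalizer ((P : Subgroup G) : Set G) ∧
      (∃ n : ℕ, y ^ q ^ n = 1) ∧ ∃ a ∈ (P : Subgroup G), y * a ≠ a * y := by
  haveI : Finite G' := Finite.of_surjective f hf
  obtain ⟨Q, x, hxn, ⟨n, hxq⟩, b, hbQ, hne⟩ := h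
  obtain ⟨P, hPQ⟩ := Sylow.mapSurjective_surjective hf p Q
  have hQP : (Q : Subgroup G') = Subgroup.map f (P : Subgroup G) := by
    rw [← hPQ]; rfl
  rw [hQP] at hxn hbQ
  obtain ⟨z, hzn, hfz⟩ := exists_lift_normalizer f hf P hxn
  set k := orderOf z with hk
  have hk0 : k ≠ 0 := (orderOf_pos z).ne'
  set m := ordCompl[q] k with hm
  set a' := k.factorization q with ha'
  have hcop : Nat.Coprime q m := Nat.coprime_ordCompl hq hk0
  refine ⟨P, z ^ m, pow_mem hzn m, ⟨a', ?_⟩, ?_⟩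
  · rw [← pow_mul, mul_comm, Nat.ordProj_mul_ordCompl_eq_self]
    exact pow_orderOf_eq_one z
  · by_contra hall
    push_neg at hall
    have hfy : f (z ^ m) = x ^ m := by rw [map_pow, hfz]
    have hcomm : ∀ c ∈ Subgroup.map f (P : Subgroup G), Commute (x ^ m) c := by
      rintro c ⟨a, haP, rfl⟩
      have := hall a haP
      unfold Commute SemiconjBy
      rw [← hfy, ← map_mul, this, map_mul, hfy]
    have hxo : orderOf x ∣ q ^ n := orderOf_dvd_of_pow_eq_one hxq
    have hcopm : Nat.Coprime m (orderOf x) :=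
      (Nat.Coprime.pow_right n hcop.symm).coprime_dvd_right hxo
    obtain ⟨u, hu⟩ := exists_pow_eq' x hcopm
    have : Commute x b := by
      rw [← hu]
      exact (hcomm b hbQ).pow_left u
    exact hne this

end lift2


end SylowHelpers

/-- The Sylow graph function is `R₀`-closed: if `N₁ ∩ N₂ = 1` then `(p,q)` is an edge of
`Γ_s(G)` iff it is an edge of `Γ_s(G/N₁)` or of `Γ_s(G/N₂)`. -/
theorem sylow_R0_closed {G : Type*} [Group G] [Finite G] (N₁ N₂ : Subgroup G)
    [N₁.Normal] [N₂.Normal] (hN : N₁ ⊓ N₂ = ⊥)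
    {p q : ℕ} (hp : p.Prime) (hq : q.Prime) (hpq : p ≠ q) :
    SylowEdge p q G ↔ SylowEdge p q (G ⧸ N₁) ∨ SylowEdge p q (G ⧸ N₂) := by
  haveI : Fact p.Prime := ⟨hp⟩
  set f₁ := QuotientGroup.mk' N₁ with hf₁
  set f₂ := QuotientGroup.mk' N₂ with hf₂
  have hs₁ := QuotientGroup.mk'_surjective N₁
  have hs₂ := QuotientGroup.mk'_surjective N₂
  rw [sylowEdge_iff hp hq hpq, sylowEdge_iff hp hq hpq, sylowEdge_iff hp hq hpq]
  constructor
  · rintro ⟨P, y, hyK, ⟨n, hyq⟩, a, haP, hne⟩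
    have hmem1 : f₁ y ∈ Subgroup.normalizer ((Subgroup.map f₁ (P : Subgroup G) : Subgroup (G ⧸ N₁)) : Set (G ⧸ N₁)) :=
      Subgroup.le_normalizer_map f₁ ⟨y, hyK, rfl⟩
    have hmem2 : f₂ y ∈ Subgroup.normalizer ((Subgroup.map f₂ (P : Subgroup G) : Subgroup (G ⧸ N₂)) : Set (G ⧸ N₂)) :=
      Subgroup.le_normalizer_map f₂ ⟨y, hyK, rfl⟩
    by_cases h1 : ∃ b ∈ Subgroup.map f₁ (P : Subgroup G), f₁ y * b ≠ b * f₁ y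
    · left
      obtain ⟨b, hb, hneb⟩ := h1
      refine ⟨P.mapSurjective hs₁, f₁ y, ?_, ⟨n, by rw [← map_pow, hyq, map_one]⟩, b, ?_, hneb⟩
      · rw [Sylow.coe_mapSurjective]; exact hmem1
      · rw [Sylow.coe_mapSurjective]; exact hb
    · right
      push_neg at h1
      refine ⟨P.mapSurjective hs₂, f₂ y, ?_, ⟨n, by rw [← map_pow, hyq, map_one]⟩, f₂ a, ?_, ?_⟩
      · rw [Sylow.coe_mapSurjective]; exact hmem2
      · rw [Sylow.coe_mapSurjective]; exact ⟨a, haP, rfl⟩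
      · intro hcom2
        have hcom1 : f₁ y * f₁ a = f₁ a * f₁ y := h1 (f₁ a) ⟨a, haP, rfl⟩
        have e1 : (a * y)⁻¹ * (y * a) ∈ N₁ := by
          rw [← QuotientGroup.ker_mk' N₁, ← hf₁, MonoidHom.mem_ker]
          rw [map_mul, map_inv, map_mul, map_mul, hcom1]
          group
        have e2 : (a * y)⁻¹ * (y * a) ∈ N₂ := by
          rw [← QuotientGroup.ker_mk' N₂, ← hf₂, MonoidHom.mem_ker]
          rw [map_mul, map_inv, map_mul, map_mul, hcom2]
          group
        have : (a * y)⁻¹ * (y * a) ∈ N₁ ⊓ N₂ := ⟨e1, e2⟩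
        rw [hN, Subgroup.mem_bot] at this
        apply hne
        have := congrArg (fun t => (a * y) * t) this
        simpa [mul_assoc] using this
  · rintro (h | h)
    · exact nonCentral_lift hq f₁ hs₁ h
    · exact nonCentral_lift hq f₂ hs₂ h
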